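/- Every k-regular bipartite multigraph (k ≥ 1) has an edge set that decomposes into k pairwise disjoint perfect matchings. -/

import Mathlib

open Finset
open scoped Classical

/-- A multigraph: a type of vertices, a type of edges (parallel edges allowed),
and an assignment of an unordered pair of endpoints to each edge. -/
structure Multigraph (V E : Type) where
  ends : E → Sym2 V

namespace Multigraph

variable {V E : Type} [Fintype V] [Fintype E] (G : Multigraph V E)

/-- The edge `e` is incident with the vertex `v`. -/
def Inc (e : E) (v : V) : Prop := v ∈ G.ends e

/-- The graph has no loops. -/
def Loopless : Prop := ∀ e : E, ¬ (G.ends e).IsDiag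

/-- The degree of a vertex: the number of edges incident with it. -/
noncomputable def degree (v : V) : ℕ := (univ.filter fun e => G.Inc e v).card

/-- A perfect matching: a set of edges covering every vertex exactly once. -/
def IsPM (M : Finset E) : Prop := ∀ v : V, (M.filter fun e => G.Inc e v).card = 1

/-- The cut determined by a shore `S`: all edges with exactly one endpoint in `S`. -/
noncomputable def cut (S : Finset V) : Finset E :=
  univ.filter fun e => ∃ u v : V, G.ends e = s(u, v) ∧ u ∈ S ∧ v ∉ S

/-- `S` is the shore of an odd cut. -/
def IsOddShore (_G : Multigraph V E) (S : Finset V) : Prop := Odd S.card ∧ Odd Sᶜ.card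

/-- `S` is the shore of a tight cut: an odd cut meeting every perfect matching
in exactly one edge. -/
def IsTightShore (S : Finset V) : Prop :=
  G.IsOddShore S ∧ ∀ M : Finset E, G.IsPM M → (M ∩ G.cut S).card = 1

/-- The underlying simple graph of a multigraph. -/
def adj : SimpleGraph V := SimpleGraph.fromRel (fun u v => ∃ e : E, G.ends e = s(u, v))

/-- A matching-covered graph: connected, with at least one edge, and every
edge lies in some perfect matching. -/
def MatchingCovered : Prop :=
  G.adj.Connected ∧ Nonempty E ∧ ∀ e : E, ∃ M : Finset E, G.IsPM M ∧ e ∈ M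

/-- `G` is an `r`-graph: `r`-regular, loopless, and every odd cut has at least `r` edges. -/
def IsRGraph (r : ℕ) : Prop :=
  G.Loopless ∧ (∀ v : V, G.degree v = r) ∧
    ∀ S : Finset V, G.IsOddShore S → r ≤ (G.cut S).card

end Multigraph

namespace Multigraph

/-- A bipartition of a multigraph: every edge has exactly one endpoint in `U`. -/
def IsBipartition {V E : Type} [Fintype V] [Fintype E] (G : Multigraph V E)
    (U : Finset V) : Prop :=
  ∀ e : E, ∃ u v : V, G.ends e = s(u, v) ∧ u ∈ U ∧ v ∉ U

end Multigraph

namespace Multigraph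

variable {V E : Type} [Fintype V] [Fintype E] {G : Multigraph V E} {U : Finset V}

lemma aux_eq_of_inc_mem (hbip : G.IsBipartition U) {e : E} {u₁ u₂ : V}
    (h1 : G.Inc e u₁) (h2 : G.Inc e u₂) (hu1 : u₁ ∈ U) (hu2 : u₂ ∈ U) : u₁ = u₂ := by
  obtain ⟨a, b, hab, haU, hbU⟩ := hbip e
  rw [Inc, hab, Sym2.mem_iff] at h1 h2
  rcases h1 with rfl | rfl
  · rcases h2 with rfl | rfl
    · rfl
    · exact absurd hu2 hbU
  · exact absurd hu1 hbU

lemma aux_eq_of_inc_not_mem (hbip : G.IsBipartition U) {e : E} {u₁ u₂ : V}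
    (h1 : G.Inc e u₁) (h2 : G.Inc e u₂) (hu1 : u₁ ∉ U) (hu2 : u₂ ∉ U) : u₁ = u₂ := by
  obtain ⟨a, b, hab, haU, hbU⟩ := hbip e
  rw [Inc, hab, Sym2.mem_iff] at h1 h2
  rcases h1 with rfl | rfl
  · exact absurd haU hu1
  · rcases h2 with rfl | rfl
    · exact absurd haU hu2
    · rfl

/-- Generic double counting: if any edge is incident to at most one vertex of `s`,
then the edges incident to `s` are counted by summing degrees. -/
lemma aux_count (F : Finset E) (s : Finset V)
    (huniq : ∀ e u₁ u₂, u₁ ∈ s → u₂ ∈ s → G.Inc e u₁ → G.Inc e u₂ → u₁ = u₂) :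
    (F.filter fun e => ∃ u ∈ s, G.Inc e u).card
      = ∑ u ∈ s, (F.filter fun e => G.Inc e u).card := by
  have hrw : (F.filter fun e => ∃ u ∈ s, G.Inc e u)
      = s.biUnion (fun u => F.filter fun e => G.Inc e u) := by
    ext e
    simp only [mem_filter, mem_biUnion]
    tauto
  rw [hrw]
  apply Finset.card_biUnion
  intro u₁ hu₁ u₂ hu₂ hne
  simp only [Function.onFun]
  rw [Finset.disjoint_left]
  intro e he1 he2
  rw [mem_filter] at he1 he2
  exact hne (huniq e u₁ u₂ hu₁ hu₂ he1.2 he2.2)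

lemma aux_card_eq (hbip : G.IsBipartition U) {F : Finset E} {k : ℕ} (hk : 0 < k)
    (hF : ∀ v : V, (F.filter fun e => G.Inc e v).card = k) : U.card = Uᶜ.card := by
  have h1 : F = F.filter fun e => ∃ u ∈ U, G.Inc e u := by
    rw [eq_comm, Finset.filter_eq_self]
    intro e _
    obtain ⟨a, b, hab, haU, hbU⟩ := hbip e
    exact ⟨a, haU, by rw [Inc, hab]; exact Sym2.mem_mk_left a b⟩
  have h2 : F = F.filter fun e => ∃ u ∈ Uᶜ, G.Inc e u := by
    rw [eq_comm, Finset.filter_eq_self]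
    intro e _
    obtain ⟨a, b, hab, haU, hbU⟩ := hbip e
    exact ⟨b, Finset.mem_compl.mpr hbU, by rw [Inc, hab]; exact Sym2.mem_mk_right a b⟩
  have c1 : F.card = U.card * k := by
    conv_lhs => rw [h1]
    rw [aux_count F U (fun e u₁ u₂ h1 h2 i1 i2 => aux_eq_of_inc_mem hbip i1 i2 h1 h2)]
    rw [Finset.sum_congr rfl (fun u _ => hF u), Finset.sum_const, smul_eq_mul]
  have c2 : F.card = Uᶜ.card * k := by
    conv_lhs => rw [h2]
    rw [aux_count F Uᶜ (fun e u₁ u₂ h1 h2 i1 i2 =>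
      aux_eq_of_inc_not_mem hbip i1 i2 (Finset.mem_compl.mp h1) (Finset.mem_compl.mp h2))]
    rw [Finset.sum_congr rfl (fun u _ => hF u), Finset.sum_const, smul_eq_mul]
  exact Nat.eq_of_mul_eq_mul_right hk (c1 ▸ c2)

/-- Hall: a regular bipartite multigraph contains a perfect matching. -/
lemma aux_matching (hbip : G.IsBipartition U) {F : Finset E} {k : ℕ} (hk : 0 < k)
    (hF : ∀ v : V, (F.filter fun e => G.Inc e v).card = k) :
    ∃ M : Finset E, M ⊆ F ∧ G.IsPM M := by
  -- neighborhoods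
  set N : V → Finset V := fun u => univ.filter fun v => ∃ e ∈ F, G.ends e = s(u, v) with hN
  -- Hall condition
  have hall : ∀ s : Finset {x // x ∈ U}, s.card ≤ (s.biUnion fun u => N u.val).card := by
    intro s
    set T := s.biUnion fun u => N u.val with hT
    set s' : Finset V := s.image Subtype.val with hs'
    have hs'card : s'.card = s.card := Finset.card_image_of_injective _ Subtype.val_injective
    have hs'U : ∀ v ∈ s', v ∈ U := by
      intro v hv; obtain ⟨u, _, rfl⟩ := Finset.mem_image.mp hv; exact u.2
    have c1 : (F.filter fun e => ∃ u ∈ s', G.Inc e u).card = s'.card * k := by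
      rw [aux_count F s' (fun e u₁ u₂ h1 h2 i1 i2 =>
        aux_eq_of_inc_mem hbip i1 i2 (hs'U _ h1) (hs'U _ h2))]
      rw [Finset.sum_congr rfl (fun u _ => hF u), Finset.sum_const, smul_eq_mul]
    have sub : (F.filter fun e => ∃ u ∈ s', G.Inc e u)
        ⊆ T.biUnion fun v => F.filter fun e => G.Inc e v := by
      intro e he
      rw [mem_filter] at he
      obtain ⟨heF, u, hus, hinc⟩ := he
      obtain ⟨a, b, hab, haU, hbU⟩ := hbip e
      have hua : u = a := by
        rw [Inc, hab, Sym2.mem_iff] at hinc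
        rcases hinc with rfl | rfl
        · rfl
        · exact absurd (hs'U _ hus) hbU
      subst hua
      obtain ⟨u', hu's, rfl⟩ := Finset.mem_image.mp hus
      refine Finset.mem_biUnion.mpr ⟨b, ?_, ?_⟩
      · exact Finset.mem_biUnion.mpr ⟨u', hu's, by
          simp only [hN, mem_filter, mem_univ, true_and]; exact ⟨e, heF, hab⟩⟩
      · exact mem_filter.mpr ⟨heF, by rw [Inc, hab]; exact Sym2.mem_mk_right _ _⟩
    have c2 : (F.filter fun e => ∃ u ∈ s', G.Inc e u).card ≤ T.card * k := by
      calc (F.filter fun e => ∃ u ∈ s', G.Inc e u).card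
          ≤ (T.biUnion fun v => F.filter fun e => G.Inc e v).card := Finset.card_le_card sub
        _ ≤ ∑ v ∈ T, (F.filter fun e => G.Inc e v).card := Finset.card_biUnion_le
        _ = T.card * k := by
            rw [Finset.sum_congr rfl (fun u _ => hF u), Finset.sum_const, smul_eq_mul]
    have := c1 ▸ c2
    rw [hs'card] at this
    exact Nat.le_of_mul_le_mul_right this hk
  obtain ⟨g, hginj, hgmem⟩ :=
    (Finset.all_card_le_biUnion_card_iff_exists_injective (fun u : {x // x ∈ U} => N u.val)).mp
      hall
  -- basic facts about g
  have hedge : ∀ u : {x // x ∈ U}, ∃ e, e ∈ F ∧ G.ends e = s(u.val, g u) := by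
    intro u
    have := hgmem u
    simp only [hN, mem_filter, mem_univ, true_and] at this
    obtain ⟨e, he, hends⟩ := this
    exact ⟨e, he, hends⟩
  have hgU : ∀ u : {x // x ∈ U}, g u ∉ U := by
    intro u hgu
    obtain ⟨e, _, hends⟩ := hedge u
    obtain ⟨a, b, hab, haU, hbU⟩ := hbip e
    rw [hab, Sym2.eq_iff] at hends
    rcases hends with ⟨rfl, rfl⟩ | ⟨rfl, rfl⟩
    · exact hbU hgu
    · exact hbU u.2
  -- choose the edges
  set ed : {x // x ∈ U} → E := fun u => (hedge u).choose with hed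
  have hedF : ∀ u, ed u ∈ F := fun u => (hedge u).choose_spec.1
  have hedends : ∀ u, G.ends (ed u) = s(u.val, g u) := fun u => (hedge u).choose_spec.2
  set M : Finset E := Finset.image ed Finset.univ with hM
  refine ⟨M, ?_, ?_⟩
  · intro e he
    obtain ⟨u, _, rfl⟩ := Finset.mem_image.mp he
    exact hedF u
  -- surjectivity of g onto Uᶜ
  have hcard : U.card = Uᶜ.card := aux_card_eq hbip hk hF
  have hgsurj : ∀ v ∉ U, ∃ u, g u = v := by
    intro v hv
    have himg : Finset.image g Finset.univ = Uᶜ := by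
      apply Finset.eq_of_subset_of_card_le
      · intro x hx
        obtain ⟨u, _, rfl⟩ := Finset.mem_image.mp hx
        exact Finset.mem_compl.mpr (hgU u)
      · rw [Finset.card_image_of_injective _ hginj, Finset.card_univ, Fintype.card_coe, hcard]
    have : v ∈ Finset.image g Finset.univ := himg ▸ Finset.mem_compl.mpr hv
    obtain ⟨u, _, hu⟩ := Finset.mem_image.mp this
    exact ⟨u, hu⟩
  -- perfect matching
  intro v
  by_cases hv : v ∈ U
  · have : M.filter (fun e => G.Inc e v) = {ed ⟨v, hv⟩} := by
      ext x
      simp only [mem_filter, hM, Finset.mem_image, Finset.mem_univ, true_and,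
        Finset.mem_singleton]
      constructor
      · rintro ⟨⟨u, rfl⟩, hinc⟩
        rw [Inc, hedends u, Sym2.mem_iff] at hinc
        rcases hinc with rfl | rfl
        · rfl
        · exact absurd hv (hgU u)
      · rintro rfl
        refine ⟨⟨⟨v, hv⟩, rfl⟩, ?_⟩
        rw [Inc, hedends ⟨v, hv⟩]
        exact Sym2.mem_mk_left _ _
    rw [this, Finset.card_singleton]
  · obtain ⟨u₀, hu₀⟩ := hgsurj v hv
    have : M.filter (fun e => G.Inc e v) = {ed u₀} := by
      ext x
      simp only [mem_filter, hM, Finset.mem_image, Finset.mem_univ, true_and,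
        Finset.mem_singleton]
      constructor
      · rintro ⟨⟨u, rfl⟩, hinc⟩
        rw [Inc, hedends u, Sym2.mem_iff] at hinc
        rcases hinc with rfl | rfl
        · exact absurd u.2 hv
        · have : u = u₀ := hginj (hu₀ ▸ rfl)
          rw [this]
      · rintro rfl
        refine ⟨⟨u₀, rfl⟩, ?_⟩
        rw [Inc, hedends u₀, ← hu₀]
        exact Sym2.mem_mk_right _ _
    rw [this, Finset.card_singleton]

/-- Induction: decomposition of a `k`-regular edge set into `k` perfect matchings. -/
lemma aux_decomp (hbip : G.IsBipartition U) :
    ∀ (k : ℕ) (F : Finset E), (∀ v : V, (F.filter fun e => G.Inc e v).card = k) →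
      ∃ f : Fin k → Finset E,
        (∀ i, G.IsPM (f i)) ∧ (∀ i j, i ≠ j → Disjoint (f i) (f j)) ∧
        (∀ i, f i ⊆ F) ∧ (∀ e ∈ F, ∃ i, e ∈ f i) := by
  intro k
  induction k with
  | zero =>
    intro F hF
    refine ⟨Fin.elim0, fun i => i.elim0, fun i => i.elim0, fun i => i.elim0, ?_⟩
    intro e he
    exfalso
    obtain ⟨a, b, hab, haU, hbU⟩ := hbip e
    have : e ∈ F.filter fun e => G.Inc e a :=
      mem_filter.mpr ⟨he, by rw [Inc, hab]; exact Sym2.mem_mk_left _ _⟩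
    have h1 := Finset.card_pos.mpr ⟨e, this⟩
    have h0 := hF a
    omega
  | succ n ih =>
    intro F hF
    obtain ⟨M, hMF, hMpm⟩ := aux_matching hbip (Nat.succ_pos n) hF
    have hF' : ∀ v : V, ((F \ M).filter fun e => G.Inc e v).card = n := by
      intro v
      have hsub : (M.filter fun e => G.Inc e v) ⊆ (F.filter fun e => G.Inc e v) :=
        Finset.filter_subset_filter _ hMF
      have hrw : ((F \ M).filter fun e => G.Inc e v)
          = (F.filter fun e => G.Inc e v) \ (M.filter fun e => G.Inc e v) := by
        ext x; simp only [mem_filter, Finset.mem_sdiff]; tauto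
      rw [hrw, Finset.card_sdiff_of_subset hsub, hF v, hMpm v]
      omega
    obtain ⟨f', hpm', hdisj', hsub', hcov'⟩ := ih (F \ M) hF'
    refine ⟨Fin.cons M f', ?_, ?_, ?_, ?_⟩
    · intro i
      rcases Fin.eq_zero_or_eq_succ i with rfl | ⟨j, rfl⟩
      · simpa using hMpm
      · simpa using hpm' j
    · intro i j hij
      have hMd : ∀ j, Disjoint M (f' j) := fun j =>
        Finset.disjoint_of_subset_right (hsub' j) Finset.sdiff_disjoint.symm
      rcases Fin.eq_zero_or_eq_succ i with rfl | ⟨i', rfl⟩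
      · rcases Fin.eq_zero_or_eq_succ j with rfl | ⟨j', rfl⟩
        · exact absurd rfl hij
        · simpa using hMd j'
      · rcases Fin.eq_zero_or_eq_succ j with rfl | ⟨j', rfl⟩
        · simpa using (hMd i').symm
        · have : i' ≠ j' := fun h => hij (by rw [h])
          simpa using hdisj' i' j' this
    · intro i
      rcases Fin.eq_zero_or_eq_succ i with rfl | ⟨j, rfl⟩
      · simpa using hMF
      · simp only [Fin.cons_succ]
        exact (hsub' j).trans (Finset.sdiff_subset)
    · intro e he
      by_cases heM : e ∈ M
      · exact ⟨0, by simpa using heM⟩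
      · obtain ⟨i, hi⟩ := hcov' e (Finset.mem_sdiff.mpr ⟨he, heM⟩)
        exact ⟨i.succ, by simpa using hi⟩

end Multigraph

open Multigraph in
/-- every `k`-regular bipartite multigraph (`k ≥ 1`) decomposes
into `k` pairwise disjoint perfect matchings covering all edges. -/
theorem regular_bipartite_decomposition {V E : Type} [Fintype V] [Fintype E]
    (G : Multigraph V E) (U : Finset V) (hbip : G.IsBipartition U)
    (k : ℕ) (hk : 1 ≤ k) (hreg : ∀ v : V, G.degree v = k) :
    ∃ f : Fin k → Finset E,
      (∀ i, G.IsPM (f i)) ∧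
      (∀ i j, i ≠ j → Disjoint (f i) (f j)) ∧
      (∀ e : E, ∃ i, e ∈ f i) := by
  obtain ⟨f, hpm, hdisj, _, hcov⟩ := G.aux_decomp hbip k (Finset.univ : Finset E)
    (fun v => hreg v)
  exact ⟨f, hpm, hdisj, fun e => hcov e (Finset.mem_univ e)⟩
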